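/- Let G be a finite group and g ∈ G a semirational element of order n. If n is an odd prime power, then e(g) ≤ 3. If n is a power of 2, then e(g) ≤ 4. -/

import Mathlib

/-- The generalized order of `g`: the smallest positive `k` such that some product of
`k` conjugates of `g` equals the identity. -/
noncomputable def genOrder {G : Type*} [Group G] (g : G) : ℕ :=
  sInf {k | 0 < k ∧ ∃ l : List G, l.length = k ∧ (l.map fun x => x⁻¹ * g * x).prod = 1}

theorem stmt7 {G : Type*} [Group G] [Finite G] (g : G) (n : ℕ) (hn : orderOf g = n)
    (hsemi : ∀ m : ℕ, Nat.Coprime m n → IsConj g (g ^ m) ∨ IsConj g⁻¹ (g ^ m)) :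
    (∀ p k : ℕ, p.Prime → Odd p → n = p ^ k → genOrder g ≤ 3) ∧
    (∀ k : ℕ, n = 2 ^ k → genOrder g ≤ 4) := by
  have hn0 : 0 < n := hn ▸ orderOf_pos g
  set P : ℤ → Prop := fun z => IsConj g (g ^ z) with hP
  have P1 : P 1 := by rw [hP]; simp only [zpow_one]; exact IsConj.refl g
  have hgn : g ^ (n : ℤ) = 1 := by rw [zpow_natCast, ← hn, pow_orderOf_eq_one]
  have hgdvd : ∀ z : ℤ, (n : ℤ) ∣ z → g ^ z = 1 := by
    intro z ⟨q, hq⟩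
    rw [hq, zpow_mul, hgn, one_zpow]
  -- semirationality in ℤ form
  have Psemi : ∀ z : ℤ, Int.gcd z n = 1 → P z ∨ P (-z) := by
    intro z hz
    have hnne : (n : ℤ) ≠ 0 := by exact_mod_cast hn0.ne'
    set m : ℕ := (z % (n : ℤ)).toNat with hm
    have hmz : (m : ℤ) = z % (n : ℤ) := Int.toNat_of_nonneg (Int.emod_nonneg z hnne)
    have hco : Nat.Coprime m n := by
      have h1 : IsCoprime z (n : ℤ) := Int.isCoprime_iff_gcd_eq_one.mpr hz
      have h2 : IsCoprime ((m : ℤ)) (n : ℤ) := by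
        rw [hmz, Int.emod_def]
        have := h1.add_mul_left_left (-(z / n))
        rwa [sub_eq_add_neg, ← mul_neg]
      have := Int.isCoprime_iff_gcd_eq_one.mp h2
      rwa [Int.gcd_natCast_natCast] at this
    have hgz : g ^ z = g ^ m := by
      have hzd : (n : ℤ) ∣ z - m := by
        rw [hmz, Int.emod_def]; exact ⟨z / n, by ring⟩
      have h1 : g ^ (z - (m : ℤ)) = 1 := hgdvd _ hzd
      rw [zpow_sub, zpow_natCast] at h1
      exact mul_inv_eq_one.mp h1
    rcases hsemi m hco with h | h
    · left; rw [hP]; simpa [hgz] using h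
    · right
      obtain ⟨c, hc⟩ := isConj_iff.mp h
      have hc' : c * g * c⁻¹ = (g ^ m)⁻¹ := by rw [← hc]; group
      rw [hP]
      refine isConj_iff.mpr ⟨c, ?_⟩
      rw [hc', zpow_neg, hgz]
  -- building products of conjugates
  have build : ∀ L : List ℤ, (∀ a ∈ L, P a) →
      ∃ l : List G, l.length = L.length ∧ (l.map fun x => x⁻¹ * g * x).prod = g ^ L.sum := by
    intro L
    induction L with
    | nil => intro _; exact ⟨[], rfl, by simp⟩
    | cons a L ih =>
      intro h
      obtain ⟨c, hc⟩ := isConj_iff.mp (h a (List.mem_cons_self))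
      obtain ⟨l, hl, hp⟩ := ih (fun b hb => h b (List.mem_cons_of_mem _ hb))
      refine ⟨c⁻¹ :: l, by simp [hl], ?_⟩
      have hx : (c⁻¹)⁻¹ * g * c⁻¹ = g ^ a := by rw [← hc]; group
      simp only [List.map_cons, List.prod_cons, List.sum_cons, hx, hp, zpow_add]
  have key : ∀ L : List ℤ, 0 < L.length → (∀ a ∈ L, P a) → (n : ℤ) ∣ L.sum →
      genOrder g ≤ L.length := by
    intro L h1 h2 h3
    obtain ⟨l, hl, hp⟩ := build L h2
    apply Nat.sInf_le
    exact ⟨by omega, l, hl, by rw [hp]; exact hgdvd _ h3⟩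
  constructor
  · -- odd prime power case
    intro p k hp hop hnpk
    by_contra hgt
    push_neg at hgt
    have H3 : ∀ a b c : ℤ, P a → P b → P c → ¬ (n : ℤ) ∣ (a + b + c) := by
      intro a b c ha hb hc hdvd
      have := key [a, b, c] (by simp) (by simp [ha, hb, hc])
        (by simpa [add_assoc] using hdvd)
      simp only [List.length_cons, List.length_nil] at this
      omega
    rcases Nat.eq_zero_or_pos k with hk0 | hk1
    · exact H3 1 1 1 P1 P1 P1 (by simp [hnpk, hk0])
    -- now n = p^k ≥ p ≥ 3, n odd
    have hnodd : Odd n := hnpk ▸ hop.pow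
    have hp3 : 3 ≤ p := by
      have h2 := hp.two_le
      rcases hop with ⟨t, ht⟩
      omega
    have hn3 : 3 ≤ n := by
      calc 3 ≤ p := hp3
      _ = p ^ 1 := (pow_one p).symm
      _ ≤ p ^ k := Nat.pow_le_pow_right (by omega) hk1
      _ = n := hnpk.symm
    have padd : ∀ a b : ℤ, P a → P b → Int.gcd (a + b) n = 1 → P (a + b) := by
      intro a b ha hb hco
      rcases Psemi (a + b) hco with h | h
      · exact h
      · exact absurd (show (n:ℤ) ∣ a + b + -(a+b) by exact ⟨0, by ring⟩)
          (H3 a b (-(a+b)) ha hb h)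
    have hgcdnat : ∀ x : ℕ, Nat.Coprime x n → Int.gcd (x : ℤ) (n : ℤ) = 1 := by
      intro x hx
      rw [Int.gcd_natCast_natCast]; exact hx
    have hco2 : Nat.Coprime 2 n := Nat.coprime_two_left.mpr hnodd
    have P2 : P 2 := by
      have := padd 1 1 P1 P1 (by
        rw [show (1:ℤ) + 1 = ((2:ℕ):ℤ) by norm_num]
        exact hgcdnat 2 hco2)
      simpa using this
    have hcopn : ∀ x : ℕ, ¬ p ∣ x → Nat.Coprime x n := by
      intro x hx
      rw [hnpk]
      exact Nat.Coprime.pow_right k ((hp.coprime_iff_not_dvd.mpr hx).symm)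
    -- climb: every positive natural coprime to n satisfies P
    have climb : ∀ x : ℕ, 0 < x → Nat.Coprime x n → P x := by
      intro x
      induction x using Nat.strong_induction_on with
      | _ x ih =>
        intro hx hco
        rcases Nat.lt_or_ge x 3 with h3 | h3
        · interval_cases x
          · simpa using P1
          · exact P2
        · -- x ≥ 3
          by_cases hd : p ∣ (x - 1)
          · -- then p ∤ x - 2
            have hd2 : ¬ p ∣ (x - 2) := by
              intro hd2
              have : p ∣ (x - 1) - (x - 2) := Nat.dvd_sub hd hd2
              rw [show (x-1) - (x-2) = 1 by omega] at this
              have := Nat.le_of_dvd one_pos this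
              have := hp.two_le
              omega
            have hco2' : Nat.Coprime (x - 2) n := hcopn _ hd2
            have hPx2 : P ((x - 2 : ℕ) : ℤ) := ih (x - 2) (by omega) (by omega) hco2'
            have := padd ((x-2:ℕ):ℤ) 2 hPx2 P2 (by
              rw [show ((x-2:ℕ):ℤ) + 2 = ((x:ℕ):ℤ) by push_cast; omega]
              exact hgcdnat x hco)
            rwa [show ((x-2:ℕ):ℤ) + 2 = ((x:ℕ):ℤ) by push_cast; omega] at this
          · have hco1' : Nat.Coprime (x - 1) n := hcopn _ hd
            have hPx1 : P ((x - 1 : ℕ) : ℤ) := ih (x - 1) (by omega) (by omega) hco1'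
            have := padd ((x-1:ℕ):ℤ) 1 hPx1 P1 (by
              rw [show ((x-1:ℕ):ℤ) + 1 = ((x:ℕ):ℤ) by push_cast; omega]
              exact hgcdnat x hco)
            rwa [show ((x-1:ℕ):ℤ) + 1 = ((x:ℕ):ℤ) by push_cast; omega] at this
    -- final contradiction: 1 + 1 + (n-2) ≡ 0 mod n
    have hcon2 : Nat.Coprime (n - 2) n := by
      have hd : Nat.gcd (n - 2) n ∣ 2 := by
        have := Nat.dvd_sub (Nat.gcd_dvd_right (n-2) n) (Nat.gcd_dvd_left (n-2) n)
        rwa [show n - (n - 2) = 2 by omega] at this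
      have hdn : Nat.gcd (n - 2) n ∣ n := Nat.gcd_dvd_right _ _
      rcases (Nat.dvd_prime Nat.prime_two).mp hd with h | h
      · exact h
      · exfalso
        rw [h] at hdn
        exact (Nat.not_odd_iff_even.mpr (even_iff_two_dvd.mpr hdn)) hnodd
    have hPn2 : P ((n - 2 : ℕ) : ℤ) := climb (n - 2) (by omega) hcon2
    exact H3 1 1 ((n-2:ℕ):ℤ) P1 P1 hPn2 ⟨1, by push_cast; omega⟩
  · -- power of 2 case
    intro k hnk
    by_contra hgt
    push_neg at hgt
    have H4 : ∀ a b : ℤ, P a → P b → ¬ (n : ℤ) ∣ (a + b + 2) := by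
      intro a b ha hb hdvd
      have := key [a, b, 1, 1] (by simp) (by simp [ha, hb, P1])
        (by simpa [add_assoc] using hdvd)
      simp only [List.length_cons, List.length_nil] at this
      omega
    rcases Nat.lt_or_ge k 2 with hk | hk
    · -- n = 1 or 2 divides 4
      refine H4 1 1 P1 P1 ?_
      interval_cases k <;> simp [hnk] <;> norm_num
    -- k ≥ 2, n = 2^k ≥ 4
    have hn4 : 4 ≤ n := by
      calc 4 = 2 ^ 2 := by norm_num
      _ ≤ 2 ^ k := Nat.pow_le_pow_right (by norm_num) hk
      _ = n := hnk.symm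
    have hcoodd : ∀ x : ℕ, Odd x → Nat.Coprime x n := by
      intro x hx
      rw [hnk]
      exact Nat.Coprime.pow_right k (Nat.coprime_two_right.mpr hx)
    have climb : ∀ x : ℕ, Odd x → P x := by
      intro x
      induction x using Nat.strong_induction_on with
      | _ x ih =>
        intro hx
        rcases Nat.lt_or_ge x 3 with h3 | h3
        · rcases hx with ⟨t, ht⟩
          have : x = 1 := by omega
          rw [this]; simpa using P1
        · have hx2 : Odd (x - 2) := by rcases hx with ⟨t, ht⟩; exact ⟨t - 1, by omega⟩
          have hPx2 : P ((x - 2 : ℕ) : ℤ) := ih (x - 2) (by omega) hx2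
          have hgcd : Int.gcd ((x:ℕ):ℤ) (n:ℤ) = 1 := by
            rw [Int.gcd_natCast_natCast]; exact hcoodd x hx
          rcases Psemi ((x:ℕ):ℤ) hgcd with h | h
          · exact h
          · exact absurd (show (n:ℤ) ∣ ((x-2:ℕ):ℤ) + -((x:ℕ):ℤ) + 2 by
                have : ((x-2:ℕ):ℤ) + -((x:ℕ):ℤ) + 2 = 0 := by push_cast [h3]; omega
                simp [this])
              (H4 _ _ hPx2 h)
    have hodn3 : Odd (n - 3) := by
      have hne : Even n := by
        rw [hnk]; exact (Nat.even_pow).mpr ⟨even_two, by omega⟩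
      exact Nat.Even.sub_odd (by omega) hne ⟨1, by norm_num⟩
    have hPn3 : P ((n - 3 : ℕ) : ℤ) := climb (n - 3) hodn3
    exact H4 1 ((n-3:ℕ):ℤ) P1 hPn3 ⟨1, by push_cast [show 3 ≤ n by omega]; omega⟩
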